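/- Let W : X1 × X2 → Y be a MAC on finite alphabets, k1, k2 positive integers, and let (r,p) be a feasible point of the relaxed non-signaling linear program whose objective value is 1−ε with 0 ≤ ε < 1. Define the joint distribution P_{X1X2}(x1,x2) := p_{x1,x2}/(k1 k2) and let Y be the output of W on inputs (X1,X2), i.e. P_{X1X2Y}(x1,x2,y) = W(y|x1,x2) P_{X1X2}(x1,x2). Then: log2(k1) ≤ (I(X1:Y|X2) + h(ε))/(1−ε), log2(k2) ≤ (I(X2:Y|X1) + h(ε))/(1−ε), and log2(k1) + log2(k2) ≤ (I((X1,X2):Y) + h(ε))/(1−ε), where h is the binary entropy function. -/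

import Mathlib

open Finset

/-- Shannon entropy (in bits) of a finitely supported distribution `f`. -/
noncomputable def H2 {T : Type*} [Fintype T] (f : T → ℝ) : ℝ :=
  ∑ t, -(f t * Real.logb 2 (f t))

/-- `I(X1:Y|X2)` for a joint distribution `μ` of `(X1,X2,Y)`, via
`I(X:Y|Z) = H(X,Z) + H(Y,Z) − H(Z) − H(X,Y,Z)`. -/
noncomputable def miX1YcX2 {X1 X2 Y : Type*} [Fintype X1] [Fintype X2] [Fintype Y]
    (μ : X1 → X2 → Y → ℝ) : ℝ :=
  H2 (fun q : X1 × X2 => ∑ y, μ q.1 q.2 y)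
    + H2 (fun q : X2 × Y => ∑ x1, μ x1 q.1 q.2)
    - H2 (fun x2 : X2 => ∑ x1, ∑ y, μ x1 x2 y)
    - H2 (fun q : X1 × X2 × Y => μ q.1 q.2.1 q.2.2)

/-- `I(X2:Y|X1)` for a joint distribution `μ` of `(X1,X2,Y)`. -/
noncomputable def miX2YcX1 {X1 X2 Y : Type*} [Fintype X1] [Fintype X2] [Fintype Y]
    (μ : X1 → X2 → Y → ℝ) : ℝ :=
  H2 (fun q : X1 × X2 => ∑ y, μ q.1 q.2 y)
    + H2 (fun q : X1 × Y => ∑ x2, μ q.1 x2 q.2)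
    - H2 (fun x1 : X1 => ∑ x2, ∑ y, μ x1 x2 y)
    - H2 (fun q : X1 × X2 × Y => μ q.1 q.2.1 q.2.2)

/-- `I((X1,X2):Y)` for a joint distribution `μ` of `(X1,X2,Y)`, via
`I(X:Y) = H(X) + H(Y) − H(X,Y)`. -/
noncomputable def miX1X2Y {X1 X2 Y : Type*} [Fintype X1] [Fintype X2] [Fintype Y]
    (μ : X1 → X2 → Y → ℝ) : ℝ :=
  H2 (fun q : X1 × X2 => ∑ y, μ q.1 q.2 y)
    + H2 (fun y : Y => ∑ x1, ∑ x2, μ x1 x2 y)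
    - H2 (fun q : X1 × X2 × Y => μ q.1 q.2.1 q.2.2)

/-- The binary entropy function (in bits). -/
noncomputable def binH (q : ℝ) : ℝ :=
  -(q * Real.logb 2 q) - (1 - q) * Real.logb 2 (1 - q)

-- ### auxiliary lemmas ###


lemma logSum {Ω : Type*} [Fintype Ω] (u v : Ω → ℝ)
    (hu : ∀ ω, 0 ≤ u ω) (hv : ∀ ω, 0 ≤ v ω)
    (huv : ∀ ω, 0 < u ω → 0 < v ω) :
    (∑ ω, u ω) * Real.log ((∑ ω, u ω) / (∑ ω, v ω)) ≤ ∑ ω, u ω * Real.log (u ω / v ω) := by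
  set S := ∑ ω, u ω with hS
  set V := ∑ ω, v ω with hV
  rcases eq_or_lt_of_le (Finset.sum_nonneg (fun ω _ => hu ω) : (0:ℝ) ≤ S) with h0 | hSpos
  · -- S = 0, all u = 0
    have hz : ∀ ω ∈ Finset.univ, u ω = 0 :=
      (Finset.sum_eq_zero_iff_of_nonneg (fun ω _ => hu ω)).mp h0.symm
    have : ∀ ω ∈ Finset.univ, u ω * Real.log (u ω / v ω) = 0 := by
      intro ω hω; rw [hz ω hω]; ring
    have hS0 : S = 0 := by rw [hS, ← h0]
    rw [Finset.sum_congr rfl this, hS0]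
    simp
  · rw [← hS] at hSpos
    have hVpos : 0 < V := by
      obtain ⟨ω, hω⟩ : ∃ ω, 0 < u ω := by
        by_contra h
        push_neg at h
        have : S ≤ 0 := Finset.sum_nonpos (fun ω _ => h ω)
        linarith
      exact lt_of_lt_of_le (huv ω hω) (Finset.single_le_sum (fun ω _ => hv ω) (Finset.mem_univ ω))
    -- pointwise: u * log(S/V) + u - v*S/V ≤ u * log(u/v)
    have key : ∀ ω, u ω * Real.log (S / V) + (u ω - v ω * S / V) ≤ u ω * Real.log (u ω / v ω) := by
      intro ω
      rcases eq_or_lt_of_le (hu ω) with h0 | hpos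
      · rw [← h0]
        have : 0 ≤ v ω * S / V := div_nonneg (mul_nonneg (hv ω) hSpos.le) hVpos.le
        simp only [zero_mul, zero_sub]
        linarith
      · have hvpos := huv ω hpos
        have h1 : Real.log (u ω / v ω) - Real.log (S / V) = Real.log (u ω * V / (v ω * S)) := by
          rw [Real.log_div (by positivity) (by positivity), Real.log_div (by positivity) (by positivity),
            Real.log_div (by positivity) (by positivity),
            Real.log_mul (by positivity) (by positivity), Real.log_mul (by positivity) (by positivity)]
          ring
        have h2 : 1 - (u ω * V / (v ω * S))⁻¹ ≤ Real.log (u ω * V / (v ω * S)) :=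
          Real.one_sub_inv_le_log_of_pos (by positivity)
        have h3 : (u ω * V / (v ω * S))⁻¹ = v ω * S / (u ω * V) := by
          rw [inv_div]
        rw [h3] at h2
        have h4 : u ω * (1 - v ω * S / (u ω * V)) ≤ u ω * Real.log (u ω * V / (v ω * S)) :=
          mul_le_mul_of_nonneg_left h2 (le_of_lt hpos)
        have h5 : u ω * (1 - v ω * S / (u ω * V)) = u ω - v ω * S / V := by
          field_simp
        nlinarith [h1, h4, h5]
    calc S * Real.log (S / V) = ∑ ω, (u ω * Real.log (S / V) + (u ω - v ω * S / V)) := by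
          rw [Finset.sum_add_distrib, ← Finset.sum_mul, ← hS]
          have : ∑ ω, (u ω - v ω * S / V) = S - V * S / V := by
            rw [Finset.sum_sub_distrib]
            congr 1
            rw [← Finset.sum_div, ← Finset.sum_mul]
          rw [this]
          field_simp
          ring
      _ ≤ ∑ ω, u ω * Real.log (u ω / v ω) := Finset.sum_le_sum (fun ω _ => key ω)

lemma logbSum {Ω : Type*} [Fintype Ω] (u v : Ω → ℝ)
    (hu : ∀ ω, 0 ≤ u ω) (hv : ∀ ω, 0 ≤ v ω)
    (huv : ∀ ω, 0 < u ω → 0 < v ω) :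
    (∑ ω, u ω) * Real.logb 2 ((∑ ω, u ω) / (∑ ω, v ω)) ≤ ∑ ω, u ω * Real.logb 2 (u ω / v ω) := by
  have h := logSum u v hu hv huv
  have hl2 : 0 < Real.log 2 := Real.log_pos one_lt_two
  simp only [Real.logb]
  have e1 : (∑ ω, u ω) * (Real.log ((∑ ω, u ω) / (∑ ω, v ω)) / Real.log 2)
      = ((∑ ω, u ω) * Real.log ((∑ ω, u ω) / (∑ ω, v ω))) / Real.log 2 := by ring
  have e2 : ∑ ω, u ω * (Real.log (u ω / v ω) / Real.log 2)
      = (∑ ω, u ω * Real.log (u ω / v ω)) / Real.log 2 := by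
    rw [Finset.sum_div]; exact Finset.sum_congr rfl (fun ω _ => by ring)
  rw [e1, e2]
  gcongr

lemma pos_pos_of_mul_pos {a b : ℝ} (ha : 0 ≤ a) (hb : 0 ≤ b) (h : 0 < a * b) : 0 < a ∧ 0 < b := by
  constructor
  · rcases ha.lt_or_eq with h' | h'
    · exact h'
    · exfalso; rw [← h'] at h; simp at h
  · rcases hb.lt_or_eq with h' | h'
    · exact h'
    · exfalso; rw [← h'] at h; simp at h

lemma core {Ω : Type*} [Fintype Ω] (P Q T : Ω → ℝ) (k ε : ℝ)
    (hP0 : ∀ ω, 0 ≤ P ω) (hQ0 : ∀ ω, 0 ≤ Q ω)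
    (hT0 : ∀ ω, 0 ≤ T ω) (hT1 : ∀ ω, T ω ≤ 1)
    (hPQ : ∀ ω, 0 < P ω → 0 < Q ω)
    (hPsum : ∑ ω, P ω = 1) (hQsum : ∑ ω, Q ω ≤ 1)
    (hk : 1 ≤ k) (hε0 : 0 ≤ ε) (hε1 : ε < 1)
    (ha : ∑ ω, P ω * T ω = 1 - ε)
    (hq : ∑ ω, Q ω * T ω ≤ 1 / k) :
    (1 - ε) * Real.logb 2 k ≤ (∑ ω, P ω * Real.logb 2 (P ω / Q ω)) + binH ε := by
  have hT1' : ∀ ω, 0 ≤ 1 - T ω := fun ω => by linarith [hT1 ω]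
  set q := ∑ ω, Q ω * T ω with hqdef
  set q' := ∑ ω, Q ω * (1 - T ω) with hq'def
  have hq0 : 0 ≤ q := Finset.sum_nonneg (fun ω _ => mul_nonneg (hQ0 ω) (hT0 ω))
  have hq'0 : 0 ≤ q' := Finset.sum_nonneg (fun ω _ => mul_nonneg (hQ0 ω) (hT1' ω))
  have h1ε : 0 < 1 - ε := by linarith
  -- q > 0
  have hqpos : 0 < q := by
    obtain ⟨ω, hω⟩ : ∃ ω, 0 < P ω * T ω := by
      by_contra h
      push_neg at h
      have : (1:ℝ) - ε ≤ 0 := ha ▸ Finset.sum_nonpos (fun ω _ => h ω)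
      linarith
    obtain ⟨hPpos, hTpos⟩ := pos_pos_of_mul_pos (hP0 ω) (hT0 ω) hω
    have hQTpos : 0 < Q ω * T ω := mul_pos (hPQ ω hPpos) hTpos
    exact lt_of_lt_of_le hQTpos (Finset.single_le_sum
      (f := fun ω => Q ω * T ω) (fun ω _ => mul_nonneg (hQ0 ω) (hT0 ω)) (Finset.mem_univ ω))
  -- step 1: pointwise split
  have step1 : ∀ ω, P ω * Real.logb 2 (P ω / Q ω) =
      (P ω * T ω) * Real.logb 2 ((P ω * T ω) / (Q ω * T ω))
      + (P ω * (1 - T ω)) * Real.logb 2 ((P ω * (1 - T ω)) / (Q ω * (1 - T ω))) := by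
    intro ω
    rcases (hP0 ω).lt_or_eq with hPpos | h0
    swap
    · rw [← h0]; simp
    have hQpos := hPQ ω hPpos
    rcases (hT0 ω).lt_or_eq with hTpos | hT0'
    swap
    · rw [← hT0']; simp
    rcases (hT1 ω).eq_or_lt with hT1e | hTlt
    · rw [hT1e]; simp
    have e1 : (P ω * T ω) / (Q ω * T ω) = P ω / Q ω :=
      mul_div_mul_right _ _ (ne_of_gt hTpos)
    have e2 : (P ω * (1 - T ω)) / (Q ω * (1 - T ω)) = P ω / Q ω :=
      mul_div_mul_right _ _ (by linarith)
    rw [e1, e2]; ring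
  have Dsplit : ∑ ω, P ω * Real.logb 2 (P ω / Q ω) =
      (∑ ω, (P ω * T ω) * Real.logb 2 ((P ω * T ω) / (Q ω * T ω)))
      + ∑ ω, (P ω * (1 - T ω)) * Real.logb 2 ((P ω * (1 - T ω)) / (Q ω * (1 - T ω))) := by
    rw [← Finset.sum_add_distrib]
    exact Finset.sum_congr rfl (fun ω _ => step1 ω)
  have hS2 : ∑ ω, P ω * (1 - T ω) = ε := by
    have e : ∑ ω, P ω * (1 - T ω) = (∑ ω, P ω) - ∑ ω, P ω * T ω := by
      rw [← Finset.sum_sub_distrib]; exact Finset.sum_congr rfl (fun ω _ => by ring)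
    rw [e, hPsum, ha]; ring
  -- log-sum on both parts
  have ls1 := logbSum (fun ω => P ω * T ω) (fun ω => Q ω * T ω)
    (fun ω => mul_nonneg (hP0 ω) (hT0 ω)) (fun ω => mul_nonneg (hQ0 ω) (hT0 ω))
    (fun ω h => by
      obtain ⟨h1, h2⟩ := pos_pos_of_mul_pos (hP0 ω) (hT0 ω) h
      exact mul_pos (hPQ ω h1) h2)
  have ls2 := logbSum (fun ω => P ω * (1 - T ω)) (fun ω => Q ω * (1 - T ω))
    (fun ω => mul_nonneg (hP0 ω) (hT1' ω)) (fun ω => mul_nonneg (hQ0 ω) (hT1' ω))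
    (fun ω h => by
      obtain ⟨h1, h2⟩ := pos_pos_of_mul_pos (hP0 ω) (hT1' ω) h
      exact mul_pos (hPQ ω h1) h2)
  rw [ha, ← hqdef] at ls1
  rw [hS2, ← hq'def] at ls2
  -- step 4
  have step4 : (1 - ε) * Real.logb 2 (1 - ε) + (1 - ε) * Real.logb 2 k ≤
      (1 - ε) * Real.logb 2 ((1 - ε) / q) := by
    have h2 : Real.logb 2 q ≤ Real.logb 2 (1 / k) :=
      Real.logb_le_logb_of_le one_lt_two hqpos hq
    have h3 : Real.logb 2 (1 / k) = - Real.logb 2 k := by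
      rw [one_div, Real.logb_inv]
    rw [h3] at h2
    have h4 : Real.logb 2 ((1 - ε) / q) = Real.logb 2 (1 - ε) - Real.logb 2 q := by
      rw [Real.logb_div (by linarith) (ne_of_gt hqpos)]
    rw [h4, mul_sub]
    nlinarith [mul_le_mul_of_nonneg_left h2 h1ε.le]
  -- step 5
  have step5 : ε * Real.logb 2 ε ≤ ε * Real.logb 2 (ε / q') := by
    rcases hε0.lt_or_eq with hεpos | h0
    swap
    · rw [← h0]; simp
    have hq'pos : 0 < q' := by
      obtain ⟨ω, hω⟩ : ∃ ω, 0 < P ω * (1 - T ω) := by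
        by_contra h
        push_neg at h
        have : ε ≤ 0 := hS2 ▸ Finset.sum_nonpos (fun ω _ => h ω)
        linarith
      obtain ⟨h1, h2⟩ := pos_pos_of_mul_pos (hP0 ω) (hT1' ω) hω
      have hQQ : 0 < Q ω * (1 - T ω) := mul_pos (hPQ ω h1) h2
      exact lt_of_lt_of_le hQQ (Finset.single_le_sum
        (f := fun ω => Q ω * (1 - T ω)) (fun ω _ => mul_nonneg (hQ0 ω) (hT1' ω)) (Finset.mem_univ ω))
    have hq'le1 : q' ≤ 1 := by
      have e : q + q' = ∑ ω, Q ω := by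
        rw [hqdef, hq'def, ← Finset.sum_add_distrib]
        exact Finset.sum_congr rfl (fun ω _ => by ring)
      linarith
    have hmono : Real.logb 2 ε ≤ Real.logb 2 (ε / q') := by
      apply Real.logb_le_logb_of_le one_lt_two hεpos
      rw [le_div_iff₀ hq'pos]
      nlinarith
    exact mul_le_mul_of_nonneg_left hmono hε0
  have hbin : binH ε = -(ε * Real.logb 2 ε) - (1 - ε) * Real.logb 2 (1 - ε) := rfl
  rw [hbin]
  linarith [ls1, ls2, Dsplit, step4, step5]


/-- One-shot converse bounds for relaxed non-signaling assisted codes: if `(r,p)` is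
a feasible point of the relaxed non-signaling linear program for `(W,k1,k2)` with
objective value `1−ε`, and `X1,X2` are distributed according to `p/(k1 k2)` with `Y`
the output of `W`, then `log2 k1 ≤ (I(X1:Y|X2)+h(ε))/(1−ε)`,
`log2 k2 ≤ (I(X2:Y|X1)+h(ε))/(1−ε)` and
`log2 k1 + log2 k2 ≤ (I((X1,X2):Y)+h(ε))/(1−ε)`. -/

lemma sumTriple {A B C : Type*} [Fintype A] [Fintype B] [Fintype C] (f : A → B → C → ℝ) :
    ∑ ω : A × B × C, f ω.1 ω.2.1 ω.2.2 = ∑ a, ∑ b, ∑ c, f a b c := by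
  rw [Fintype.sum_prod_type]
  exact Finset.sum_congr rfl fun a _ => by rw [Fintype.sum_prod_type]

lemma sumPair {A B : Type*} [Fintype A] [Fintype B] (f : A → B → ℝ) :
    ∑ ω : A × B, f ω.1 ω.2 = ∑ a, ∑ b, f a b := Fintype.sum_prod_type _

lemma H2_eq {T : Type*} [Fintype T] (f : T → ℝ) :
    H2 f = -∑ t, f t * Real.logb 2 (f t) := by
  simp [H2]

lemma condBound1 {X1 X2 Y : Type*} [Fintype X1] [Fintype X2] [Fintype Y]
    (P T : X1 → X2 → Y → ℝ) (k ε : ℝ)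
    (hP0 : ∀ x1 x2 y, 0 ≤ P x1 x2 y)
    (hPsum : ∑ x1, ∑ x2, ∑ y, P x1 x2 y = 1)
    (hT0 : ∀ x1 x2 y, 0 ≤ T x1 x2 y) (hT1 : ∀ x1 x2 y, T x1 x2 y ≤ 1)
    (haT : ∑ x1, ∑ x2, ∑ y, P x1 x2 y * T x1 x2 y = 1 - ε)
    (hQT : ∀ x2 y, k * (∑ x1, (∑ y', P x1 x2 y') * T x1 x2 y) ≤ ∑ x1, ∑ y', P x1 x2 y')
    (hk : 1 ≤ k) (hε0 : 0 ≤ ε) (hε1 : ε < 1) :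
    (1 - ε) * Real.logb 2 k ≤ miX1YcX2 P + binH ε := by
  classical
  have hkpos : (0:ℝ) < k := by linarith
  set B : X1 → X2 → ℝ := fun x1 x2 => ∑ y, P x1 x2 y with hBdef
  set C : X2 → Y → ℝ := fun x2 y => ∑ x1, P x1 x2 y with hCdef
  set A : X2 → ℝ := fun x2 => ∑ x1, ∑ y, P x1 x2 y with hAdef
  have hB0 : ∀ x1 x2, 0 ≤ B x1 x2 := fun x1 x2 => Finset.sum_nonneg fun y _ => hP0 x1 x2 y
  have hC0 : ∀ x2 y, 0 ≤ C x2 y := fun x2 y => Finset.sum_nonneg fun x1 _ => hP0 x1 x2 y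
  have hA0 : ∀ x2, 0 ≤ A x2 := fun x2 =>
    Finset.sum_nonneg fun x1 _ => Finset.sum_nonneg fun y _ => hP0 x1 x2 y
  have hPB : ∀ x1 x2 y, P x1 x2 y ≤ B x1 x2 := fun x1 x2 y =>
    Finset.single_le_sum (fun y _ => hP0 x1 x2 y) (Finset.mem_univ y)
  have hPC : ∀ x1 x2 y, P x1 x2 y ≤ C x2 y := fun x1 x2 y =>
    Finset.single_le_sum (f := fun x1 => P x1 x2 y) (fun x1 _ => hP0 x1 x2 y) (Finset.mem_univ x1)
  have hBA : ∀ x1 x2, B x1 x2 ≤ A x2 := fun x1 x2 =>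
    Finset.single_le_sum (f := fun x1 => ∑ y, P x1 x2 y)
      (fun x1 _ => Finset.sum_nonneg fun y _ => hP0 x1 x2 y) (Finset.mem_univ x1)
  have hCA : ∀ x2, ∑ y, C x2 y = A x2 := fun x2 => Finset.sum_comm
  have hBA' : ∀ x2, ∑ x1, B x1 x2 = A x2 := fun x2 => rfl
  have hAsum : ∑ x2, A x2 = 1 := by
    rw [← hPsum]; exact Finset.sum_comm
  set Qf : X1 → X2 → Y → ℝ :=
    fun x1 x2 y => if A x2 = 0 then 0 else B x1 x2 * C x2 y / A x2 with hQdef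
  have hQ0 : ∀ x1 x2 y, 0 ≤ Qf x1 x2 y := by
    intro x1 x2 y
    simp only [hQdef]
    split
    · exact le_refl 0
    · exact div_nonneg (mul_nonneg (hB0 x1 x2) (hC0 x2 y)) (hA0 x2)
  have hPQ : ∀ x1 x2 y, 0 < P x1 x2 y → 0 < Qf x1 x2 y := by
    intro x1 x2 y hp
    have hBpos := lt_of_lt_of_le hp (hPB x1 x2 y)
    have hCpos := lt_of_lt_of_le hp (hPC x1 x2 y)
    have hApos := lt_of_lt_of_le hBpos (hBA x1 x2)
    simp only [hQdef, if_neg (ne_of_gt hApos)]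
    exact div_pos (mul_pos hBpos hCpos) hApos
  -- bound on inner sums of Qf
  have hQin : ∀ x2, ∑ x1, ∑ y, Qf x1 x2 y ≤ A x2 := by
    intro x2
    rcases eq_or_ne (A x2) 0 with h | h
    · simp only [hQdef, if_pos h]
      simp only [Finset.sum_const_zero]
      exact hA0 x2
    · have e : ∑ x1, ∑ y, Qf x1 x2 y = (∑ x1, B x1 x2) * (∑ y, C x2 y) / A x2 := by
        simp only [hQdef, if_neg h]
        rw [Finset.sum_mul, Finset.sum_div]
        refine Finset.sum_congr rfl fun x1 _ => ?_
        rw [← Finset.sum_div, ← Finset.mul_sum]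
      rw [e, hBA', hCA]
      rw [mul_div_assoc, div_self h, mul_one]
  have hQsum : ∑ x2, ∑ x1, ∑ y, Qf x1 x2 y ≤ 1 := by
    rw [← hAsum]
    exact Finset.sum_le_sum fun x2 _ => hQin x2
  -- bound on Qf * T sums
  have hQTin : ∀ x2 y, ∑ x1, Qf x1 x2 y * T x1 x2 y ≤ C x2 y / k := by
    intro x2 y
    rcases eq_or_ne (A x2) 0 with h | h
    · simp only [hQdef, if_pos h]
      simp only [zero_mul, Finset.sum_const_zero]
      exact div_nonneg (hC0 x2 y) hkpos.le
    · have hApos : 0 < A x2 := lt_of_le_of_ne (hA0 x2) (Ne.symm h)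
      have e : ∑ x1, Qf x1 x2 y * T x1 x2 y
          = (C x2 y / A x2) * ∑ x1, B x1 x2 * T x1 x2 y := by
        simp only [hQdef, if_neg h]
        rw [Finset.mul_sum]
        refine Finset.sum_congr rfl fun x1 _ => ?_
        ring
      rw [e]
      have h1 : ∑ x1, B x1 x2 * T x1 x2 y ≤ A x2 / k := by
        rw [le_div_iff₀ hkpos]
        have := hQT x2 y
        rw [hBdef]
        dsimp only
        linarith [hQT x2 y]
      have h2 : (C x2 y / A x2) * (∑ x1, B x1 x2 * T x1 x2 y) ≤ (C x2 y / A x2) * (A x2 / k) :=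
        mul_le_mul_of_nonneg_left h1 (div_nonneg (hC0 x2 y) (hA0 x2))
      have h3 : (C x2 y / A x2) * (A x2 / k) = C x2 y / k := by
        field_simp
      linarith [h2, h3.symm.le]
  have hQTsum : ∑ x2, ∑ y, ∑ x1, Qf x1 x2 y * T x1 x2 y ≤ 1 / k := by
    have h1 : ∑ x2, ∑ y, ∑ x1, Qf x1 x2 y * T x1 x2 y ≤ ∑ x2, ∑ y, C x2 y / k :=
      Finset.sum_le_sum fun x2 _ => Finset.sum_le_sum fun y _ => hQTin x2 y
    have h2 : ∑ x2, ∑ y, C x2 y / k = 1 / k := by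
      simp only [← Finset.sum_div]
      congr 1
      rw [← hAsum]
      exact Finset.sum_congr rfl fun x2 _ => hCA x2
    linarith
  -- pointwise log expansion
  have point : ∀ x1 x2 y, P x1 x2 y * Real.logb 2 (P x1 x2 y / Qf x1 x2 y)
      = P x1 x2 y * Real.logb 2 (P x1 x2 y) - P x1 x2 y * Real.logb 2 (B x1 x2)
        - P x1 x2 y * Real.logb 2 (C x2 y) + P x1 x2 y * Real.logb 2 (A x2) := by
    intro x1 x2 y
    rcases (hP0 x1 x2 y).lt_or_eq with hp | hp
    · have hBpos := lt_of_lt_of_le hp (hPB x1 x2 y)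
      have hCpos := lt_of_lt_of_le hp (hPC x1 x2 y)
      have hApos := lt_of_lt_of_le hBpos (hBA x1 x2)
      have hQpos : (0:ℝ) < B x1 x2 * C x2 y / A x2 := div_pos (mul_pos hBpos hCpos) hApos
      simp only [hQdef, if_neg (ne_of_gt hApos)]
      rw [Real.logb_div (ne_of_gt hp) (ne_of_gt hQpos),
        Real.logb_div (ne_of_gt (mul_pos hBpos hCpos)) (ne_of_gt hApos),
        Real.logb_mul (ne_of_gt hBpos) (ne_of_gt hCpos)]
      ring
    · rw [← hp]
      simp
  -- evaluate the four marginal sums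
  have e2 : ∑ ω : X1 × X2 × Y, P ω.1 ω.2.1 ω.2.2 * Real.logb 2 (B ω.1 ω.2.1)
      = ∑ q : X1 × X2, (∑ y, P q.1 q.2 y) * Real.logb 2 (∑ y, P q.1 q.2 y) := by
    rw [sumTriple (f := fun x1 x2 y => P x1 x2 y * Real.logb 2 (B x1 x2)),
        sumPair (f := fun x1 x2 => (∑ y, P x1 x2 y) * Real.logb 2 (∑ y, P x1 x2 y))]
    refine Finset.sum_congr rfl fun x1 _ => Finset.sum_congr rfl fun x2 _ => ?_
    rw [← Finset.sum_mul]
  have e3 : ∑ ω : X1 × X2 × Y, P ω.1 ω.2.1 ω.2.2 * Real.logb 2 (C ω.2.1 ω.2.2)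
      = ∑ q : X2 × Y, (∑ x1, P x1 q.1 q.2) * Real.logb 2 (∑ x1, P x1 q.1 q.2) := by
    rw [sumTriple (f := fun x1 x2 y => P x1 x2 y * Real.logb 2 (C x2 y)),
        sumPair (f := fun x2 y => (∑ x1, P x1 x2 y) * Real.logb 2 (∑ x1, P x1 x2 y)),
        Finset.sum_comm]
    refine Finset.sum_congr rfl fun x2 _ => ?_
    rw [Finset.sum_comm]
    refine Finset.sum_congr rfl fun y _ => ?_
    rw [← Finset.sum_mul]
  have e4 : ∑ ω : X1 × X2 × Y, P ω.1 ω.2.1 ω.2.2 * Real.logb 2 (A ω.2.1)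
      = ∑ x2, (∑ x1, ∑ y, P x1 x2 y) * Real.logb 2 (∑ x1, ∑ y, P x1 x2 y) := by
    rw [sumTriple (f := fun x1 x2 y => P x1 x2 y * Real.logb 2 (A x2)), Finset.sum_comm]
    refine Finset.sum_congr rfl fun x2 _ => ?_
    simp only [← Finset.sum_mul]
    rfl
  -- the divergence identity
  have hD : ∑ ω : X1 × X2 × Y,
        P ω.1 ω.2.1 ω.2.2 * Real.logb 2 (P ω.1 ω.2.1 ω.2.2 / Qf ω.1 ω.2.1 ω.2.2)
      = miX1YcX2 P := by
    have e0 := Finset.sum_congr rfl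
      (fun (ω : X1 × X2 × Y) (_ : ω ∈ Finset.univ) => point ω.1 ω.2.1 ω.2.2)
    rw [e0]
    simp only [Finset.sum_add_distrib, Finset.sum_sub_distrib]
    rw [e2, e3, e4]
    simp only [miX1YcX2, H2_eq]
    ring
  -- apply the core bound
  have hcore := core (fun ω : X1 × X2 × Y => P ω.1 ω.2.1 ω.2.2)
    (fun ω => Qf ω.1 ω.2.1 ω.2.2) (fun ω => T ω.1 ω.2.1 ω.2.2) k ε
    (fun ω => hP0 _ _ _) (fun ω => hQ0 _ _ _) (fun ω => hT0 _ _ _) (fun ω => hT1 _ _ _)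
    (fun ω => hPQ _ _ _)
    (by show ∑ ω : X1 × X2 × Y, P ω.1 ω.2.1 ω.2.2 = 1
        rw [sumTriple (f := fun x1 x2 y => P x1 x2 y)]; exact hPsum)
    (by show ∑ ω : X1 × X2 × Y, Qf ω.1 ω.2.1 ω.2.2 ≤ 1
        rw [sumTriple (f := fun x1 x2 y => Qf x1 x2 y), Finset.sum_comm]; exact hQsum)
    hk hε0 hε1
    (by show ∑ ω : X1 × X2 × Y, P ω.1 ω.2.1 ω.2.2 * T ω.1 ω.2.1 ω.2.2 = 1 - ε
        rw [sumTriple (f := fun x1 x2 y => P x1 x2 y * T x1 x2 y)]; exact haT)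
    (by show ∑ ω : X1 × X2 × Y, Qf ω.1 ω.2.1 ω.2.2 * T ω.1 ω.2.1 ω.2.2 ≤ 1 / k
        rw [sumTriple (f := fun x1 x2 y => Qf x1 x2 y * T x1 x2 y)]
        have hre : ∑ x1, ∑ x2, ∑ y, Qf x1 x2 y * T x1 x2 y
            = ∑ x2, ∑ y, ∑ x1, Qf x1 x2 y * T x1 x2 y := by
          rw [Finset.sum_comm]
          exact Finset.sum_congr rfl fun x2 _ => Finset.sum_comm
        rw [hre]; exact hQTsum)
  rw [hD] at hcore
  exact hcore


lemma H2_swap {A B : Type*} [Fintype A] [Fintype B] (g : A → B → ℝ) :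
    H2 (fun q : B × A => g q.2 q.1) = H2 (fun q : A × B => g q.1 q.2) := by
  simp only [H2]
  exact Fintype.sum_equiv (Equiv.prodComm B A) _ _ (fun q => rfl)

lemma H2_swap3 {A B C : Type*} [Fintype A] [Fintype B] [Fintype C] (g : A → B → C → ℝ) :
    H2 (fun q : B × A × C => g q.2.1 q.1 q.2.2) = H2 (fun q : A × B × C => g q.1 q.2.1 q.2.2) := by
  simp only [H2]
  exact Fintype.sum_equiv
    ⟨fun q => (q.2.1, q.1, q.2.2), fun q => (q.2.1, q.1, q.2.2), fun q => rfl, fun q => rfl⟩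
    _ _ (fun q => rfl)

lemma condBound2 {X1 X2 Y : Type*} [Fintype X1] [Fintype X2] [Fintype Y]
    (P T : X1 → X2 → Y → ℝ) (k ε : ℝ)
    (hP0 : ∀ x1 x2 y, 0 ≤ P x1 x2 y)
    (hPsum : ∑ x1, ∑ x2, ∑ y, P x1 x2 y = 1)
    (hT0 : ∀ x1 x2 y, 0 ≤ T x1 x2 y) (hT1 : ∀ x1 x2 y, T x1 x2 y ≤ 1)
    (haT : ∑ x1, ∑ x2, ∑ y, P x1 x2 y * T x1 x2 y = 1 - ε)
    (hQT : ∀ x1 y, k * (∑ x2, (∑ y', P x1 x2 y') * T x1 x2 y) ≤ ∑ x2, ∑ y', P x1 x2 y')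
    (hk : 1 ≤ k) (hε0 : 0 ≤ ε) (hε1 : ε < 1) :
    (1 - ε) * Real.logb 2 k ≤ miX2YcX1 P + binH ε := by
  have h := condBound1 (fun x2 x1 y => P x1 x2 y) (fun x2 x1 y => T x1 x2 y) k ε
    (fun x2 x1 y => hP0 x1 x2 y)
    (by rw [Finset.sum_comm]; exact hPsum)
    (fun x2 x1 y => hT0 x1 x2 y) (fun x2 x1 y => hT1 x1 x2 y)
    (by rw [Finset.sum_comm]; exact haT)
    (fun x1 y => hQT x1 y) hk hε0 hε1
  have e : miX1YcX2 (fun x2 x1 y => P x1 x2 y) = miX2YcX1 P := by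
    simp only [miX1YcX2, miX2YcX1]
    rw [H2_swap (fun a b => ∑ y, P a b y), H2_swap3 P]
  rw [e] at h
  exact h

lemma condBound3 {X1 X2 Y : Type*} [Fintype X1] [Fintype X2] [Fintype Y]
    (P T : X1 → X2 → Y → ℝ) (k ε : ℝ)
    (hP0 : ∀ x1 x2 y, 0 ≤ P x1 x2 y)
    (hPsum : ∑ x1, ∑ x2, ∑ y, P x1 x2 y = 1)
    (hT0 : ∀ x1 x2 y, 0 ≤ T x1 x2 y) (hT1 : ∀ x1 x2 y, T x1 x2 y ≤ 1)
    (haT : ∑ x1, ∑ x2, ∑ y, P x1 x2 y * T x1 x2 y = 1 - ε)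
    (hQT : ∀ y, k * (∑ x1, ∑ x2, (∑ y', P x1 x2 y') * T x1 x2 y) ≤ 1)
    (hk : 1 ≤ k) (hε0 : 0 ≤ ε) (hε1 : ε < 1) :
    (1 - ε) * Real.logb 2 k ≤ miX1X2Y P + binH ε := by
  classical
  have hkpos : (0:ℝ) < k := by linarith
  set B : X1 → X2 → ℝ := fun x1 x2 => ∑ y, P x1 x2 y with hBdef
  set E : Y → ℝ := fun y => ∑ x1, ∑ x2, P x1 x2 y with hEdef
  have hB0 : ∀ x1 x2, 0 ≤ B x1 x2 := fun x1 x2 => Finset.sum_nonneg fun y _ => hP0 x1 x2 y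
  have hE0 : ∀ y, 0 ≤ E y := fun y =>
    Finset.sum_nonneg fun x1 _ => Finset.sum_nonneg fun x2 _ => hP0 x1 x2 y
  have hPB : ∀ x1 x2 y, P x1 x2 y ≤ B x1 x2 := fun x1 x2 y =>
    Finset.single_le_sum (fun y _ => hP0 x1 x2 y) (Finset.mem_univ y)
  have hPE : ∀ x1 x2 y, P x1 x2 y ≤ E y := by
    intro x1 x2 y
    refine le_trans (Finset.single_le_sum (f := fun x2 => P x1 x2 y)
      (fun x2 _ => hP0 x1 x2 y) (Finset.mem_univ x2)) ?_
    exact Finset.single_le_sum (f := fun x1 => ∑ x2, P x1 x2 y)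
      (fun x1 _ => Finset.sum_nonneg fun x2 _ => hP0 x1 x2 y) (Finset.mem_univ x1)
  have hBsum : ∑ x1, ∑ x2, B x1 x2 = 1 := hPsum
  have hre3 : ∀ (f : X1 → X2 → Y → ℝ), ∑ x1, ∑ x2, ∑ y, f x1 x2 y
      = ∑ y, ∑ x1, ∑ x2, f x1 x2 y := by
    intro f
    have h1 : ∀ x1, ∑ x2, ∑ y, f x1 x2 y = ∑ y, ∑ x2, f x1 x2 y := fun x1 => Finset.sum_comm
    rw [Finset.sum_congr rfl fun x1 _ => h1 x1]
    exact Finset.sum_comm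
  have hEsum : ∑ y, E y = 1 := by
    show ∑ y, ∑ x1, ∑ x2, P x1 x2 y = 1
    rw [← hre3 P]
    exact hPsum
  set Qf : X1 → X2 → Y → ℝ := fun x1 x2 y => B x1 x2 * E y with hQdef
  have hQ0 : ∀ x1 x2 y, 0 ≤ Qf x1 x2 y := fun x1 x2 y =>
    mul_nonneg (hB0 x1 x2) (hE0 y)
  have hPQ : ∀ x1 x2 y, 0 < P x1 x2 y → 0 < Qf x1 x2 y := fun x1 x2 y hp =>
    mul_pos (lt_of_lt_of_le hp (hPB x1 x2 y)) (lt_of_lt_of_le hp (hPE x1 x2 y))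
  have hQsum : ∑ x1, ∑ x2, ∑ y, Qf x1 x2 y ≤ 1 := by
    have e : ∑ x1, ∑ x2, ∑ y, Qf x1 x2 y = (∑ x1, ∑ x2, B x1 x2) * ∑ y, E y := by
      rw [Finset.sum_mul]
      refine Finset.sum_congr rfl fun x1 _ => ?_
      rw [Finset.sum_mul]
      refine Finset.sum_congr rfl fun x2 _ => ?_
      rw [← Finset.mul_sum]
    rw [e, hBsum, hEsum]
    norm_num
  have hQTsum : ∑ x1, ∑ x2, ∑ y, Qf x1 x2 y * T x1 x2 y ≤ 1 / k := by
    rw [hre3]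
    have hin : ∀ y, ∑ x1, ∑ x2, Qf x1 x2 y * T x1 x2 y ≤ E y / k := by
      intro y
      have e : ∑ x1, ∑ x2, Qf x1 x2 y * T x1 x2 y
          = E y * ∑ x1, ∑ x2, B x1 x2 * T x1 x2 y := by
        rw [Finset.mul_sum]
        refine Finset.sum_congr rfl fun x1 _ => ?_
        rw [Finset.mul_sum]
        refine Finset.sum_congr rfl fun x2 _ => ?_
        ring
      rw [e]
      have h1 : ∑ x1, ∑ x2, B x1 x2 * T x1 x2 y ≤ 1 / k := by
        rw [le_div_iff₀ hkpos]
        have := hQT y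
        rw [hBdef]
        dsimp only
        linarith [hQT y]
      calc E y * ∑ x1, ∑ x2, B x1 x2 * T x1 x2 y ≤ E y * (1 / k) :=
            mul_le_mul_of_nonneg_left h1 (hE0 y)
        _ = E y / k := by ring
    calc ∑ y, ∑ x1, ∑ x2, Qf x1 x2 y * T x1 x2 y ≤ ∑ y, E y / k :=
          Finset.sum_le_sum fun y _ => hin y
      _ = 1 / k := by rw [← Finset.sum_div, hEsum]
  -- pointwise log expansion
  have point : ∀ x1 x2 y, P x1 x2 y * Real.logb 2 (P x1 x2 y / Qf x1 x2 y)
      = P x1 x2 y * Real.logb 2 (P x1 x2 y) - P x1 x2 y * Real.logb 2 (B x1 x2)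
        - P x1 x2 y * Real.logb 2 (E y) := by
    intro x1 x2 y
    rcases (hP0 x1 x2 y).lt_or_eq with hp | hp
    · have hBpos := lt_of_lt_of_le hp (hPB x1 x2 y)
      have hEpos := lt_of_lt_of_le hp (hPE x1 x2 y)
      simp only [hQdef]
      rw [Real.logb_div (ne_of_gt hp) (ne_of_gt (mul_pos hBpos hEpos)),
        Real.logb_mul (ne_of_gt hBpos) (ne_of_gt hEpos)]
      ring
    · rw [← hp]
      simp
  have e2 : ∑ ω : X1 × X2 × Y, P ω.1 ω.2.1 ω.2.2 * Real.logb 2 (B ω.1 ω.2.1)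
      = ∑ q : X1 × X2, (∑ y, P q.1 q.2 y) * Real.logb 2 (∑ y, P q.1 q.2 y) := by
    rw [sumTriple (f := fun x1 x2 y => P x1 x2 y * Real.logb 2 (B x1 x2)),
        sumPair (f := fun x1 x2 => (∑ y, P x1 x2 y) * Real.logb 2 (∑ y, P x1 x2 y))]
    refine Finset.sum_congr rfl fun x1 _ => Finset.sum_congr rfl fun x2 _ => ?_
    rw [← Finset.sum_mul]
  have e3 : ∑ ω : X1 × X2 × Y, P ω.1 ω.2.1 ω.2.2 * Real.logb 2 (E ω.2.2)
      = ∑ y, (∑ x1, ∑ x2, P x1 x2 y) * Real.logb 2 (∑ x1, ∑ x2, P x1 x2 y) := by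
    rw [sumTriple (f := fun x1 x2 y => P x1 x2 y * Real.logb 2 (E y)),
      hre3 (fun x1 x2 y => P x1 x2 y * Real.logb 2 (E y))]
    refine Finset.sum_congr rfl fun y _ => ?_
    simp only [← Finset.sum_mul]
    rfl
  have hD : ∑ ω : X1 × X2 × Y,
        P ω.1 ω.2.1 ω.2.2 * Real.logb 2 (P ω.1 ω.2.1 ω.2.2 / Qf ω.1 ω.2.1 ω.2.2)
      = miX1X2Y P := by
    have e0 := Finset.sum_congr rfl
      (fun (ω : X1 × X2 × Y) (_ : ω ∈ Finset.univ) => point ω.1 ω.2.1 ω.2.2)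
    rw [e0]
    simp only [Finset.sum_sub_distrib]
    rw [e2, e3]
    simp only [miX1X2Y, H2_eq]
    ring
  have hcore := core (fun ω : X1 × X2 × Y => P ω.1 ω.2.1 ω.2.2)
    (fun ω => Qf ω.1 ω.2.1 ω.2.2) (fun ω => T ω.1 ω.2.1 ω.2.2) k ε
    (fun ω => hP0 _ _ _) (fun ω => hQ0 _ _ _) (fun ω => hT0 _ _ _) (fun ω => hT1 _ _ _)
    (fun ω => hPQ _ _ _)
    (by show ∑ ω : X1 × X2 × Y, P ω.1 ω.2.1 ω.2.2 = 1
        rw [sumTriple (f := fun x1 x2 y => P x1 x2 y)]; exact hPsum)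
    (by show ∑ ω : X1 × X2 × Y, Qf ω.1 ω.2.1 ω.2.2 ≤ 1
        rw [sumTriple (f := fun x1 x2 y => Qf x1 x2 y)]; exact hQsum)
    hk hε0 hε1
    (by show ∑ ω : X1 × X2 × Y, P ω.1 ω.2.1 ω.2.2 * T ω.1 ω.2.1 ω.2.2 = 1 - ε
        rw [sumTriple (f := fun x1 x2 y => P x1 x2 y * T x1 x2 y)]; exact haT)
    (by show ∑ ω : X1 × X2 × Y, Qf ω.1 ω.2.1 ω.2.2 * T ω.1 ω.2.1 ω.2.2 ≤ 1 / k
        rw [sumTriple (f := fun x1 x2 y => Qf x1 x2 y * T x1 x2 y)]; exact hQTsum)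
  rw [hD] at hcore
  exact hcore

theorem oneShot_outer_bounds {X1 X2 Y : Type*} [Fintype X1] [Fintype X2] [Fintype Y]
    (W : X1 → X2 → Y → ℝ)
    (hW0 : ∀ x1 x2 y, 0 ≤ W x1 x2 y)
    (hW1 : ∀ x1 x2, ∑ y, W x1 x2 y = 1)
    (k1 k2 : ℕ) (hk1 : 0 < k1) (hk2 : 0 < k2)
    (r : X1 → X2 → Y → ℝ) (p : X1 → X2 → ℝ)
    (hr1 : ∀ y, ∑ x1, ∑ x2, r x1 x2 y ≤ 1)
    (hp1 : ∑ x1, ∑ x2, p x1 x2 = (k1 : ℝ) * (k2 : ℝ))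
    (hrp1 : ∀ x2 y, (k1 : ℝ) * ∑ x1, r x1 x2 y ≤ ∑ x1, p x1 x2)
    (hrp2 : ∀ x1 y, (k2 : ℝ) * ∑ x2, r x1 x2 y ≤ ∑ x2, p x1 x2)
    (hr0 : ∀ x1 x2 y, 0 ≤ r x1 x2 y)
    (hrp : ∀ x1 x2 y, r x1 x2 y ≤ p x1 x2)
    (ε : ℝ) (hε0 : 0 ≤ ε) (hε1 : ε < 1)
    (hobj : (1 / ((k1 : ℝ) * (k2 : ℝ))) * ∑ x1, ∑ x2, ∑ y, W x1 x2 y * r x1 x2 y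
      = 1 - ε) :
    Real.logb 2 (k1 : ℝ) ≤
        (miX1YcX2 (fun x1 x2 y => W x1 x2 y * (p x1 x2 / ((k1 : ℝ) * (k2 : ℝ))))
          + binH ε) / (1 - ε) ∧
    Real.logb 2 (k2 : ℝ) ≤
        (miX2YcX1 (fun x1 x2 y => W x1 x2 y * (p x1 x2 / ((k1 : ℝ) * (k2 : ℝ))))
          + binH ε) / (1 - ε) ∧
    Real.logb 2 (k1 : ℝ) + Real.logb 2 (k2 : ℝ) ≤
        (miX1X2Y (fun x1 x2 y => W x1 x2 y * (p x1 x2 / ((k1 : ℝ) * (k2 : ℝ))))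
          + binH ε) / (1 - ε) := by
  classical
  have hk1' : (1:ℝ) ≤ (k1:ℝ) := by exact_mod_cast hk1
  have hk2' : (1:ℝ) ≤ (k2:ℝ) := by exact_mod_cast hk2
  have hc : (0:ℝ) < (k1:ℝ) * (k2:ℝ) := by nlinarith
  have hc1 : (1:ℝ) ≤ (k1:ℝ) * (k2:ℝ) := by nlinarith
  have h1ε : (0:ℝ) < 1 - ε := by linarith
  -- nonemptiness
  rcases isEmpty_or_nonempty X1 with hX1 | hX1
  · exfalso
    rw [Finset.univ_eq_empty, Finset.sum_empty] at hp1
    nlinarith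
  rcases isEmpty_or_nonempty X2 with hX2 | hX2
  · exfalso
    have : ∑ x1 : X1, ∑ x2 : X2, p x1 x2 = 0 := by
      simp [Finset.univ_eq_empty (α := X2)]
    rw [this] at hp1
    nlinarith
  rcases isEmpty_or_nonempty Y with hY | hY
  · exfalso
    have := hW1 (Classical.arbitrary X1) (Classical.arbitrary X2)
    rw [Finset.univ_eq_empty, Finset.sum_empty] at this
    norm_num at this
  have hp0 : ∀ x1 x2, 0 ≤ p x1 x2 := fun x1 x2 =>
    le_trans (hr0 x1 x2 (Classical.arbitrary Y)) (hrp x1 x2 (Classical.arbitrary Y))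
  have hr0' : ∀ x1 x2 y, p x1 x2 = 0 → r x1 x2 y = 0 := fun x1 x2 y h =>
    le_antisymm (h ▸ hrp x1 x2 y) (hr0 x1 x2 y)
  set P : X1 → X2 → Y → ℝ :=
    fun x1 x2 y => W x1 x2 y * (p x1 x2 / ((k1 : ℝ) * (k2 : ℝ))) with hPdef
  set T : X1 → X2 → Y → ℝ :=
    fun x1 x2 y => if p x1 x2 = 0 then 0 else r x1 x2 y / p x1 x2 with hTdef
  have hP0 : ∀ x1 x2 y, 0 ≤ P x1 x2 y := fun x1 x2 y =>
    mul_nonneg (hW0 x1 x2 y) (div_nonneg (hp0 x1 x2) hc.le)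
  have hT0 : ∀ x1 x2 y, 0 ≤ T x1 x2 y := by
    intro x1 x2 y
    simp only [hTdef]
    split
    · exact le_refl 0
    · exact div_nonneg (hr0 x1 x2 y) (hp0 x1 x2)
  have hT1 : ∀ x1 x2 y, T x1 x2 y ≤ 1 := by
    intro x1 x2 y
    simp only [hTdef]
    split
    · norm_num
    · rename_i h
      rw [div_le_one (lt_of_le_of_ne (hp0 x1 x2) (Ne.symm h))]
      exact hrp x1 x2 y
  have hBP : ∀ x1 x2, ∑ y, P x1 x2 y = p x1 x2 / ((k1 : ℝ) * (k2 : ℝ)) := by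
    intro x1 x2
    show ∑ y, W x1 x2 y * (p x1 x2 / ((k1 : ℝ) * (k2 : ℝ))) = _
    rw [← Finset.sum_mul, hW1, one_mul]
  have hPsum : ∑ x1, ∑ x2, ∑ y, P x1 x2 y = 1 := by
    have e : ∀ x1, ∑ x2, ∑ y, P x1 x2 y = ∑ x2, p x1 x2 / ((k1 : ℝ) * (k2 : ℝ)) :=
      fun x1 => Finset.sum_congr rfl fun x2 _ => hBP x1 x2
    rw [Finset.sum_congr rfl fun x1 _ => e x1]
    simp only [← Finset.sum_div]
    rw [hp1, div_self (ne_of_gt hc)]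
  have hPT : ∀ x1 x2 y, P x1 x2 y * T x1 x2 y
      = W x1 x2 y * r x1 x2 y / ((k1 : ℝ) * (k2 : ℝ)) := by
    intro x1 x2 y
    simp only [hPdef, hTdef]
    by_cases h : p x1 x2 = 0
    · rw [if_pos h, h, hr0' x1 x2 y h]
      ring
    · rw [if_neg h]
      field_simp
  have haT : ∑ x1, ∑ x2, ∑ y, P x1 x2 y * T x1 x2 y = 1 - ε := by
    have e : ∀ x1 x2, ∑ y, P x1 x2 y * T x1 x2 y
        = ∑ y, W x1 x2 y * r x1 x2 y / ((k1 : ℝ) * (k2 : ℝ)) :=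
      fun x1 x2 => Finset.sum_congr rfl fun y _ => hPT x1 x2 y
    rw [Finset.sum_congr rfl fun x1 _ => Finset.sum_congr rfl fun x2 _ => e x1 x2]
    simp only [← Finset.sum_div]
    rw [← hobj]
    ring
  have hBT : ∀ x1 x2 y, (∑ y', P x1 x2 y') * T x1 x2 y
      = r x1 x2 y / ((k1 : ℝ) * (k2 : ℝ)) := by
    intro x1 x2 y
    rw [hBP]
    simp only [hTdef]
    by_cases h : p x1 x2 = 0
    · rw [if_pos h, h, hr0' x1 x2 y h]
      ring
    · rw [if_neg h]
      field_simp
  -- bound 1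
  have hQT1 : ∀ x2 y, (k1 : ℝ) * (∑ x1, (∑ y', P x1 x2 y') * T x1 x2 y)
      ≤ ∑ x1, ∑ y', P x1 x2 y' := by
    intro x2 y
    rw [Finset.sum_congr rfl fun x1 _ => hBT x1 x2 y,
      Finset.sum_congr rfl fun x1 (_ : x1 ∈ Finset.univ) => hBP x1 x2]
    simp only [← Finset.sum_div]
    rw [← mul_div_assoc]
    exact (div_le_div_iff_of_pos_right hc).mpr (hrp1 x2 y)
  have b1 := condBound1 P T (k1 : ℝ) ε hP0 hPsum hT0 hT1 haT hQT1 hk1' hε0 hε1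
  -- bound 2
  have hQT2 : ∀ x1 y, (k2 : ℝ) * (∑ x2, (∑ y', P x1 x2 y') * T x1 x2 y)
      ≤ ∑ x2, ∑ y', P x1 x2 y' := by
    intro x1 y
    rw [Finset.sum_congr rfl fun x2 _ => hBT x1 x2 y,
      Finset.sum_congr rfl fun x2 (_ : x2 ∈ Finset.univ) => hBP x1 x2]
    simp only [← Finset.sum_div]
    rw [← mul_div_assoc]
    exact (div_le_div_iff_of_pos_right hc).mpr (hrp2 x1 y)
  have b2 := condBound2 P T (k2 : ℝ) ε hP0 hPsum hT0 hT1 haT hQT2 hk2' hε0 hε1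
  -- bound 3
  have hQT3 : ∀ y, ((k1 : ℝ) * (k2 : ℝ)) * (∑ x1, ∑ x2, (∑ y', P x1 x2 y') * T x1 x2 y)
      ≤ 1 := by
    intro y
    rw [Finset.sum_congr rfl fun x1 _ => Finset.sum_congr rfl fun x2 _ => hBT x1 x2 y]
    simp only [← Finset.sum_div]
    rw [mul_div_cancel₀ _ (ne_of_gt hc)]
    exact hr1 y
  have b3 := condBound3 P T ((k1 : ℝ) * (k2 : ℝ)) ε hP0 hPsum hT0 hT1 haT hQT3 hc1 hε0 hε1
  rw [Real.logb_mul (by positivity) (by positivity)] at b3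
  refine ⟨?_, ?_, ?_⟩
  · rw [le_div_iff₀ h1ε]
    linarith [b1]
  · rw [le_div_iff₀ h1ε]
    linarith [b2]
  · rw [le_div_iff₀ h1ε]
    linarith [b3]
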